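/- Let A, B, C, g be real numbers with A > 0, C > 0, B ≠ 0 and 0 < g < A B². Then the functions ξ(τ) = √(g/C) · (√(AB² − g) sin(√C √(AB² − g) τ)) / (√A B + √g cos(√C √(AB² − g) τ)) and η(τ) = −√(g/A) · (√g + √A B cos(√C √(AB² − g) τ)) / (√A B + √g cos(√C √(AB² − g) τ)) + B are defined for all τ ∈ ℝ, satisfy ξ' = −A (η − B) η and η' = C ξ η, are periodic with period 2π/(√C √(AB² − g)), and satisfy A (η(τ) − B)² + C ξ(τ)² = g for all τ. -/

import Mathlib

set_option maxHeartbeats 1000000 in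
/-- The explicit periodic solutions of the normal-form system `ξ' = −A(η − B)η`, `η' = Cξη`
on the level sets `G = g` with `0 < g < AB²`. -/
theorem normal_form_periodic_solutions
    (A B C g : ℝ)
    (hA : 0 < A) (hC : 0 < C) (hB : B ≠ 0)
    (hg0 : 0 < g) (hg : g < A * B ^ 2)
    (ξ η : ℝ → ℝ)
    (hξ : ξ = fun τ : ℝ => Real.sqrt (g / C) *
      (Real.sqrt (A * B ^ 2 - g) * Real.sin (Real.sqrt C * Real.sqrt (A * B ^ 2 - g) * τ)) /
      (Real.sqrt A * B + Real.sqrt g * Real.cos (Real.sqrt C * Real.sqrt (A * B ^ 2 - g) * τ)))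
    (hη : η = fun τ : ℝ => -(Real.sqrt (g / A) *
      (Real.sqrt g + Real.sqrt A * B * Real.cos (Real.sqrt C * Real.sqrt (A * B ^ 2 - g) * τ)) /
      (Real.sqrt A * B + Real.sqrt g * Real.cos (Real.sqrt C * Real.sqrt (A * B ^ 2 - g) * τ))) +
      B) :
    (∀ τ : ℝ,
      Real.sqrt A * B + Real.sqrt g * Real.cos (Real.sqrt C * Real.sqrt (A * B ^ 2 - g) * τ) ≠ 0) ∧
    (∀ τ : ℝ, HasDerivAt ξ (-A * (η τ - B) * η τ) τ ∧ HasDerivAt η (C * ξ τ * η τ) τ) ∧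
    Function.Periodic ξ (2 * Real.pi / (Real.sqrt C * Real.sqrt (A * B ^ 2 - g))) ∧
    Function.Periodic η (2 * Real.pi / (Real.sqrt C * Real.sqrt (A * B ^ 2 - g))) ∧
    ∀ τ : ℝ, A * (η τ - B) ^ 2 + C * (ξ τ) ^ 2 = g := by
  subst hξ hη
  have hr0 : 0 < A * B ^ 2 - g := by linarith
  have hA2 : Real.sqrt A ^ 2 = A := Real.sq_sqrt hA.le
  have hC2 : Real.sqrt C ^ 2 = C := Real.sq_sqrt hC.le
  have hg2 : Real.sqrt g ^ 2 = g := Real.sq_sqrt hg0.le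
  have hr2 : Real.sqrt (A * B ^ 2 - g) ^ 2 = A * B ^ 2 - g := Real.sq_sqrt hr0.le
  set sa := Real.sqrt A with hsa_def
  set sc := Real.sqrt C with hsc_def
  set sg := Real.sqrt g with hsg_def
  set sr := Real.sqrt (A * B ^ 2 - g) with hsr_def
  have hsa : 0 < sa := Real.sqrt_pos.mpr hA
  have hsc : 0 < sc := Real.sqrt_pos.mpr hC
  have hsg : 0 < sg := Real.sqrt_pos.mpr hg0
  have hsr : 0 < sr := Real.sqrt_pos.mpr hr0
  have hdiv1 : Real.sqrt (g / C) = sg / sc := Real.sqrt_div hg0.le C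
  have hdiv2 : Real.sqrt (g / A) = sg / sa := Real.sqrt_div hg0.le A
  have hr2' : sr ^ 2 = sa ^ 2 * B ^ 2 - sg ^ 2 := by rw [hA2, hg2]; exact hr2
  have hlt : sg < |sa * B| := by
    have h1 : Real.sqrt g < Real.sqrt (A * B ^ 2) := Real.sqrt_lt_sqrt hg0.le hg
    have h2 : Real.sqrt (A * B ^ 2) = sa * |B| := by
      rw [hsa_def, Real.sqrt_mul hA.le, Real.sqrt_sq_eq_abs]
    have h3 : |sa * B| = sa * |B| := by
      rw [abs_mul, abs_of_nonneg hsa.le]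
    rw [h3]; rw [h2] at h1; exact h1
  have hne : ∀ τ : ℝ, sa * B + sg * Real.cos (sc * sr * τ) ≠ 0 := by
    intro τ h
    have h1 : sg * Real.cos (sc * sr * τ) = -(sa * B) := by linarith
    have h2 : |sg * Real.cos (sc * sr * τ)| ≤ sg := by
      rw [abs_mul, abs_of_nonneg hsg.le]
      nlinarith [Real.abs_cos_le_one (sc * sr * τ), hsg.le]
    rw [h1, abs_neg] at h2
    linarith [hlt]
  refine ⟨hne, ?_, ?_, ?_, ?_⟩
  · intro τ
    have hpy : Real.sin (sc * sr * τ) ^ 2 + Real.cos (sc * sr * τ) ^ 2 = 1 :=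
      Real.sin_sq_add_cos_sq _
    have hlin : HasDerivAt (fun t : ℝ => sc * sr * t) (sc * sr) τ := by
      simpa using (hasDerivAt_id τ).const_mul (sc * sr)
    have hcos : HasDerivAt (fun t : ℝ => Real.cos (sc * sr * t))
        (-Real.sin (sc * sr * τ) * (sc * sr)) τ :=
      (Real.hasDerivAt_cos (sc * sr * τ)).comp τ hlin
    have hsin : HasDerivAt (fun t : ℝ => Real.sin (sc * sr * t))
        (Real.cos (sc * sr * τ) * (sc * sr)) τ :=
      (Real.hasDerivAt_sin (sc * sr * τ)).comp τ hlin
    have hD : HasDerivAt (fun t : ℝ => sa * B + sg * Real.cos (sc * sr * t))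
        (sg * (-Real.sin (sc * sr * τ) * (sc * sr))) τ := (hcos.const_mul sg).const_add _
    constructor
    · have hN : HasDerivAt (fun t : ℝ => Real.sqrt (g / C) * (sr * Real.sin (sc * sr * t)))
          (Real.sqrt (g / C) * (sr * (Real.cos (sc * sr * τ) * (sc * sr)))) τ :=
        (hsin.const_mul sr).const_mul _
      have h := hN.div hD (hne τ)
      refine h.congr_deriv ?_
      symm
      rw [hdiv1, hdiv2, ← hA2]
      field_simp [hne τ]
      ring_nf
      rw [hr2', show Real.sin (sc * sr * τ) ^ 2 = 1 - Real.cos (sc * sr * τ) ^ 2 by linarith]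
      ring
    · have hN : HasDerivAt
          (fun t : ℝ => Real.sqrt (g / A) * (sg + sa * B * Real.cos (sc * sr * t)))
          (Real.sqrt (g / A) * (sa * B * (-Real.sin (sc * sr * τ) * (sc * sr)))) τ :=
        ((hcos.const_mul (sa * B)).const_add sg).const_mul _
      have h := ((hN.div hD (hne τ)).neg).add_const B
      refine h.congr_deriv ?_
      symm
      rw [hdiv1, hdiv2, ← hC2]
      field_simp [hne τ]
      ring_nf
  · intro τ
    have harg : sc * sr * (τ + 2 * Real.pi / (sc * sr)) = sc * sr * τ + 2 * Real.pi := by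
      field_simp
    simp only [harg, Real.cos_add_two_pi, Real.sin_add_two_pi]
  · intro τ
    have harg : sc * sr * (τ + 2 * Real.pi / (sc * sr)) = sc * sr * τ + 2 * Real.pi := by
      field_simp
    simp only [harg, Real.cos_add_two_pi, Real.sin_add_two_pi]
  · intro τ
    have hpy : Real.sin (sc * sr * τ) ^ 2 + Real.cos (sc * sr * τ) ^ 2 = 1 :=
      Real.sin_sq_add_cos_sq _
    simp only
    rw [hdiv1, hdiv2, ← hA2, ← hC2, ← hg2]
    field_simp [hne τ]
    ring_nf
    rw [hr2', show Real.sin (sc * sr * τ) ^ 2 = 1 - Real.cos (sc * sr * τ) ^ 2 by linarith]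
    ring
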